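/- Correctness of the Hillis–Steele parallel scan: let (M, ⊗) be a semigroup, n ∈ ℕ, T = 2ⁿ, and a : {0, …, T−1} → M. For each d define step_d : (({0,…,T−1}) → M) → (({0,…,T−1}) → M) by (step_d v)(j) = v(j) if j < 2^d, and (step_d v)(j) = v(j − 2^d) ⊗ v(j) otherwise. Let v_0 = a and v_{d+1} = step_d(v_d). Then for every j with 0 ≤ j ≤ T−1, v_n(j) = a(0) ⊗ a(1) ⊗ ⋯ ⊗ a(j). -/

import Mathlib

/-- `seqProd a s j = a s * a (s+1) * ⋯ * a (s+j)` in a semigroup. -/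
def seqProd {M : Type*} [Semigroup M] (a : ℕ → M) (s : ℕ) : ℕ → M
  | 0 => a s
  | j + 1 => seqProd a s j * a (s + j + 1)

/-- One round of the Hillis–Steele scan: position `j` is left unchanged if `j < 2^d`,
and otherwise is replaced by `v (j - 2^d) * v j`. -/
def hsStep {M : Type*} [Semigroup M] (d : ℕ) (v : ℕ → M) : ℕ → M :=
  fun j => if j < 2 ^ d then v j else v (j - 2 ^ d) * v j

/-- `hsIter a d` is the array after `d` rounds of the Hillis–Steele scan
(`v_0 = a`, `v_{d+1} = step_d v_d`). -/
def hsIter {M : Type*} [Semigroup M] (a : ℕ → M) : ℕ → ℕ → M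
  | 0 => a
  | d + 1 => hsStep d (hsIter a d)

lemma seqProd_concat {M : Type*} [Semigroup M] (a : ℕ → M) (s k : ℕ) :
    ∀ m, seqProd a s k * seqProd a (s + k + 1) m = seqProd a s (k + m + 1)
  | 0 => rfl
  | m + 1 => by
    show seqProd a s k * (seqProd a (s + k + 1) m * a (s + k + 1 + m + 1)) = _
    rw [← mul_assoc, seqProd_concat a s k m]
    show _ = seqProd a s (k + m + 1) * a (s + (k + m + 1) + 1)
    ring_nf

lemma hsIter_invariant {M : Type*} [Semigroup M] (a : ℕ → M) :
    ∀ d j, hsIter a d j =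
      if j < 2 ^ d then seqProd a 0 j else seqProd a (j - 2 ^ d + 1) (2 ^ d - 1)
  | 0, j => by
    simp [hsIter]
    rcases Nat.lt_or_ge j 1 with h | h
    · interval_cases j <;> simp [seqProd]
    · rw [if_neg (by omega)]
      have : j - 1 + 1 = j := by omega
      simp [seqProd, this]
  | d + 1, j => by
    have hq : (0:ℕ) < 2 ^ d := Nat.pow_pos (by norm_num)
    show hsStep d (hsIter a d) j = _
    unfold hsStep
    rcases Nat.lt_or_ge j (2 ^ d) with h | h
    · rw [if_pos h, hsIter_invariant a d j, if_pos h,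
        if_pos (lt_of_lt_of_le h (by rw [pow_succ]; omega))]
    · rw [if_neg (by omega)]
      rw [hsIter_invariant a d (j - 2 ^ d), hsIter_invariant a d j,
        if_neg (show ¬ j < 2 ^ d by omega)]
      rcases Nat.lt_or_ge j (2 ^ (d + 1)) with h2 | h2
      · have hlt : j - 2 ^ d < 2 ^ d := by rw [pow_succ] at h2; omega
        rw [if_pos hlt, if_pos h2]
        rcases Nat.eq_or_lt_of_le h with heq | hgt
        · have : j - 2 ^ d = 0 := by omega
          rw [this]
          have := seqProd_concat a 0 0 (2 ^ d - 1)
          simp at this ⊢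
          rw [this]
          congr 1
          omega
        · have := seqProd_concat a 0 (j - 2 ^ d) (2 ^ d - 1)
          have h1 : 0 + (j - 2 ^ d) + 1 = j - 2 ^ d + 1 := by omega
          have h2' : j - 2 ^ d + (2 ^ d - 1) + 1 = j := by omega
          rw [h1, h2'] at this
          simpa using this
      · have hge : ¬ (j - 2 ^ d < 2 ^ d) := by rw [pow_succ] at h2; omega
        rw [if_neg hge, if_neg (by omega)]
        have := seqProd_concat a (j - 2 ^ d - 2 ^ d + 1) (2 ^ d - 1) (2 ^ d - 1)
        have h1 : j - 2 ^ d - 2 ^ d + 1 + (2 ^ d - 1) + 1 = j - 2 ^ d + 1 := by omega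
        have h2' : 2 ^ d - 1 + (2 ^ d - 1) + 1 = 2 ^ (d + 1) - 1 := by
          rw [pow_succ]; omega
        have h3 : j - 2 ^ d - 2 ^ d + 1 = j - 2 ^ (d + 1) + 1 := by
          rw [pow_succ]; omega
        rw [h1, h2', h3] at this
        rw [h3]
        exact this

/-- Correctness of the Hillis–Steele parallel scan: on an input of length `T = 2^n`
(0-indexed positions `0, …, T-1`), after `n` rounds every position `j` holds the
inclusive prefix product `a 0 * a 1 * ⋯ * a j`. -/
theorem hillisSteele_correct {M : Type*} [Semigroup M] (n : ℕ) (a : ℕ → M) :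
    ∀ j, j < 2 ^ n → hsIter a n j = seqProd a 0 j := by
  intro j hj
  rw [hsIter_invariant a n j, if_pos hj]
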